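/- Let K be a cyclic cubic number field with Galois group generated by σ, and let f ∈ O_K be an algebraic integer not in ℤ. Then the set {1, f, σ(f)} is linearly independent over ℝ (equivalently, over ℚ), i.e. K = ℚ(1, f, σ(f)) and these three elements form a ℚ-basis of K. -/

import Mathlib

open NumberField

theorem stmt_13 (K : Type*) [Field K] [NumberField K]
    (hdeg : Module.finrank ℚ K = 3) [IsGalois ℚ K]
    (σ : K ≃ₐ[ℚ] K) (hgen : ∀ g : K ≃ₐ[ℚ] K, g ∈ Subgroup.zpowers σ)
    (f : 𝓞 K) (hf : ¬ ∃ n : ℤ, (f : K) = (n : K)) :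
    LinearIndependent ℚ ![(1 : K), (f : K), σ (f : K)] := by
  set x : K := (f : K) with hxdef
  -- f is not rational
  have hfQ : ∀ q : ℚ, algebraMap ℚ K q ≠ x := by
    intro q hq
    have hqi : IsIntegral ℤ q := by
      rw [← isIntegral_algebraMap_iff (algebraMap ℚ K).injective]
      rw [hq]; exact f.2
    obtain ⟨n, hn⟩ := IsIntegrallyClosed.isIntegral_iff.mp hqi
    refine hf ⟨n, ?_⟩
    rw [← hq, ← hn]
    simp [map_intCast]
  -- sigma does not fix x
  have hσx : σ x ≠ x := by
    intro h
    have hst : σ ∈ MulAction.stabilizer (K ≃ₐ[ℚ] K) x := h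
    have hall : ∀ g : K ≃ₐ[ℚ] K, g x = x := fun g =>
      Subgroup.zpowers_le.mpr hst (hgen g)
    have hbot : IntermediateField.fixedField (⊤ : Subgroup (K ≃ₐ[ℚ] K)) = ⊥ :=
      ((IsGalois.tfae).out 0 1).mp (inferInstance : IsGalois ℚ K)
    have hxmem : x ∈ IntermediateField.fixedField (⊤ : Subgroup (K ≃ₐ[ℚ] K)) := by
      intro g; exact hall g
    rw [hbot, IntermediateField.mem_bot] at hxmem
    obtain ⟨q, hq⟩ := hxmem
    exact hfQ q hq
  -- sigma cubed is identity
  have hcard : Fintype.card (K ≃ₐ[ℚ] K) = 3 := by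
    rw [← Nat.card_eq_fintype_card, IsGalois.card_aut_eq_finrank, hdeg]
  have hσ3 : σ ^ 3 = 1 := by rw [← hcard]; exact pow_card_eq_one
  set y : K := σ x with hydef
  set z : K := σ y with hzdef
  have hzx : σ z = x := by
    have : (σ ^ 3) x = x := by rw [hσ3]; rfl
    simpa [pow_succ, AlgEquiv.mul_apply] using this
  rw [Fintype.linearIndependent_iff]
  intro g hg
  set a := g 0 with hadef
  set b := g 1 with hbdef
  set c := g 2 with hcdef
  rw [Fin.sum_univ_three] at hg
  simp only [Matrix.cons_val_zero, Matrix.cons_val_one, Matrix.head_cons,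
    Matrix.cons_val_two, Matrix.tail_cons, Rat.smul_def, mul_one] at hg
  have e1 : (a : K) + (b : K) * x + (c : K) * y = 0 := hg
  have e2 : (a : K) + (b : K) * y + (c : K) * z = 0 := by
    have := congrArg σ e1
    simpa [map_add, map_mul, map_ratCast] using this
  have e3 : (a : K) + (b : K) * z + (c : K) * x = 0 := by
    have := congrArg σ e2
    simpa [map_add, map_mul, map_ratCast, hzx] using this
  have hkey : ((b : K) ^ 2 - (b : K) * c + (c : K) ^ 2) * (x - y) = 0 := by
    linear_combination ((b : K) - c) * e1 + (-(b : K)) * e2 + (c : K) * e3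
  have hu : x - y ≠ 0 := sub_ne_zero.mpr (Ne.symm hσx)
  have hbcK : (b : K) ^ 2 - (b : K) * c + (c : K) ^ 2 = 0 :=
    (mul_eq_zero.mp hkey).resolve_right hu
  have hbcQ : b ^ 2 - b * c + c ^ 2 = 0 := by exact_mod_cast hbcK
  have hc : c = 0 := by nlinarith [sq_nonneg (2 * b - c), sq_nonneg c]
  have hb : b = 0 := by nlinarith [sq_nonneg b]
  have ha : a = 0 := by
    have : (a : K) = 0 := by rw [hb, hc] at e1; simpa using e1
    exact_mod_cast this
  intro i
  fin_cases i
  · exact ha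
  · exact hb
  · exact hc
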